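/- For pairwise distinct μ_1,…,μ_N ∈ ℂ and n ≥ 2, S_n(ℂ \ {μ_1,…,μ_N}) = ℂ^n \ ⋃_{j=1}^N H_j, where H_j = {(μ_j + z_1, μ_j z_1 + z_2, …, μ_j z_{n-1}) : z ∈ ℂ^{n-1}} are affine hyperplanes. -/

import Mathlib

/-- The symmetrization map `π_n : ℂ^n → ℂ^n`, whose `j`-th coordinate is the
`(j+1)`-st elementary symmetric polynomial of the entries. -/
noncomputable def symPoly (n : ℕ) (lam : Fin n → ℂ) : Fin n → ℂ :=
  fun j => ∑ t ∈ Finset.powersetCard ((j : ℕ) + 1) Finset.univ, ∏ i ∈ t, lam i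

/-- The `n`-fold symmetric product `S_n(D) = π_n(D^n)` of a planar set `D`. -/
noncomputable def symProd (n : ℕ) (D : Set ℂ) : Set (Fin n → ℂ) :=
  symPoly n '' {lam | ∀ i, lam i ∈ D}


/-- The affine hyperplane `H(μ) = {(μ + z₁, μ z₁ + z₂, …, μ z_{n-2} + z_{n-1}, μ z_{n-1})}`
associated to `μ ∈ ℂ`, encoded via an auxiliary tuple `z : Fin (n+1) → ℂ`
with `z 0 = 1` and `z n = 0`. -/
def hplane (n : ℕ) (μ : ℂ) : Set (Fin n → ℂ) :=
  {v | ∃ z : Fin (n + 1) → ℂ, z 0 = 1 ∧ z (Fin.last n) = 0 ∧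
    ∀ j : Fin n, v j = μ * z j.castSucc + z j.succ}

open Polynomial Finset

noncomputable def coefOf (n : ℕ) (v : Fin n → ℂ) (k : ℕ) : ℂ :=
  if h : k < n then (-1) ^ (n - k) * v ⟨n - 1 - k, by omega⟩
  else if k = n then 1 else 0

noncomputable def polyOf (n : ℕ) (v : Fin n → ℂ) : Polynomial ℂ :=
  ∑ k ∈ Finset.range (n + 1), Polynomial.C (coefOf n v k) * Polynomial.X ^ k

lemma coeff_polyOf (n : ℕ) (v : Fin n → ℂ) (k : ℕ) :
    (polyOf n v).coeff k = coefOf n v k := by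
  unfold polyOf
  rw [Polynomial.finset_sum_coeff]
  simp only [Polynomial.coeff_C_mul, Polynomial.coeff_X_pow, mul_ite, mul_one, mul_zero]
  rw [Finset.sum_ite_eq (Finset.range (n + 1)) k (coefOf n v)]
  split
  · rfl
  · rename_i h
    simp only [Finset.mem_range, not_lt] at h
    unfold coefOf
    rw [dif_neg (by omega), if_neg (by omega)]

lemma coeff_polyOf_self (n : ℕ) (v : Fin n → ℂ) : (polyOf n v).coeff n = 1 := by
  rw [coeff_polyOf]; unfold coefOf; rw [dif_neg (lt_irrefl n), if_pos rfl]

lemma natDegree_polyOf (n : ℕ) (v : Fin n → ℂ) : (polyOf n v).natDegree = n := by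
  have hle : (polyOf n v).natDegree ≤ n := by
    apply Polynomial.natDegree_le_iff_coeff_eq_zero.mpr
    intro m hm
    rw [coeff_polyOf]; unfold coefOf; rw [dif_neg (by omega), if_neg (by omega)]
  have hge : n ≤ (polyOf n v).natDegree :=
    Polynomial.le_natDegree_of_ne_zero (by rw [coeff_polyOf_self]; exact one_ne_zero)
  omega

lemma monic_polyOf (n : ℕ) (v : Fin n → ℂ) : (polyOf n v).Monic := by
  rw [Polynomial.Monic, Polynomial.leadingCoeff, natDegree_polyOf, coeff_polyOf_self]

lemma eval_polyOf (n : ℕ) (v : Fin n → ℂ) (μ : ℂ) :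
    (polyOf n v).eval μ
      = μ ^ n + ∑ j : Fin n, (-1 : ℂ) ^ ((j : ℕ) + 1) * v j * μ ^ (n - 1 - (j : ℕ)) := by
  unfold polyOf
  rw [Polynomial.eval_finset_sum]
  simp only [Polynomial.eval_mul, Polynomial.eval_C, Polynomial.eval_pow, Polynomial.eval_X]
  rw [Finset.sum_range_succ]
  have h1 : coefOf n v n = 1 := by unfold coefOf; rw [dif_neg (lt_irrefl n), if_pos rfl]
  rw [h1, one_mul, add_comm]
  congr 1
  rw [← Finset.sum_range_reflect (fun k => coefOf n v k * μ ^ k) n]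
  rw [← Fin.sum_univ_eq_sum_range (fun k => coefOf n v (n - 1 - k) * μ ^ (n - 1 - k)) n]
  apply Finset.sum_congr rfl
  intro j _
  have hj : (j : ℕ) < n := j.isLt
  unfold coefOf
  rw [dif_pos (by omega)]
  have : (⟨n - 1 - (n - 1 - (j : ℕ)), by omega⟩ : Fin n) = j := Fin.ext (show n - 1 - (n - 1 - (j : ℕ)) = (j : ℕ) by omega)
  rw [this]
  have h2 : n - (n - 1 - (j : ℕ)) = (j : ℕ) + 1 := by omega
  rw [h2]

lemma polyOf_symPoly (n : ℕ) (lam : Fin n → ℂ) :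
    polyOf n (symPoly n lam) = ∏ i, (Polynomial.X - Polynomial.C (lam i)) := by
  have hcard : Multiset.card (Multiset.map lam Finset.univ.val) = n := by simp
  have hprod : ∏ i, (X - C (lam i))
      = (Multiset.map (fun a => X - C a) (Multiset.map lam Finset.univ.val)).prod := by
    rw [Multiset.map_map]
    rfl
  ext k
  rw [coeff_polyOf, hprod]
  by_cases hk : k ≤ n
  · rw [Multiset.prod_X_sub_C_coeff _ (by rw [hcard]; exact hk), hcard]
    unfold coefOf
    rcases Nat.lt_or_ge k n with h | h
    · rw [dif_pos h]
      congr 1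
      show symPoly n lam ⟨n - 1 - k, by omega⟩
          = (Multiset.map lam Finset.univ.val).esymm (n - k)
      unfold symPoly
      rw [Finset.esymm_map_val]
      have : n - 1 - k + 1 = n - k := by omega
      rw [this]
    · have hkn : k = n := le_antisymm hk h
      subst hkn
      rw [dif_neg (lt_irrefl _), if_pos rfl]
      simp [Multiset.esymm]
  · push_neg at hk
    have h1 : coefOf n (symPoly n lam) k = 0 := by
      unfold coefOf; rw [dif_neg (by omega), if_neg (by omega)]
    rw [h1]
    symm
    apply Polynomial.coeff_eq_zero_of_natDegree_lt
    calc ((Multiset.map (fun a => X - C a) (Multiset.map lam Finset.univ.val)).prod).natDegree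
        ≤ n := by
          apply le_trans (Polynomial.natDegree_multiset_prod_le _)
          rw [Multiset.map_map]
          apply le_trans (Multiset.sum_le_card_nsmul _ 1 ?_)
          · simp
          · intro x hx
            simp only [Multiset.mem_map, Function.comp] at hx
            obtain ⟨i, _, rfl⟩ := hx
            exact Polynomial.natDegree_X_sub_C_le _
      _ < k := hk

lemma polyOf_inj {n : ℕ} {v w : Fin n → ℂ} (h : polyOf n v = polyOf n w) : v = w := by
  funext j
  have hj : (j : ℕ) < n := j.isLt
  have hc := congrArg (fun p => Polynomial.coeff p (n - 1 - (j : ℕ))) h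
  simp only [coeff_polyOf] at hc
  unfold coefOf at hc
  rw [dif_pos (by omega), dif_pos (by omega)] at hc
  have hfin : (⟨n - 1 - (n - 1 - (j : ℕ)), by omega⟩ : Fin n) = j :=
    Fin.ext (show n - 1 - (n - 1 - (j : ℕ)) = (j : ℕ) by omega)
  rw [hfin] at hc
  exact mul_left_cancel₀ (pow_ne_zero _ (by norm_num)) hc

lemma mem_hplane_iff (n : ℕ) (hn : 1 ≤ n) (μ : ℂ) (v : Fin n → ℂ) :
    v ∈ hplane n μ ↔ (polyOf n v).eval μ = 0 := by
  constructor
  · rintro ⟨z, hz0, hzn, hv⟩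
    rw [eval_polyOf]
    set f : ℕ → ℂ := fun k =>
      if h : k ≤ n then (-1 : ℂ) ^ k * z ⟨k, by omega⟩ * μ ^ (n - k) else 0 with hf
    have key : ∀ j : Fin n,
        (-1 : ℂ) ^ ((j : ℕ) + 1) * v j * μ ^ (n - 1 - (j : ℕ))
          = f ((j : ℕ) + 1) - f (j : ℕ) := by
      intro j
      have hj : (j : ℕ) < n := j.isLt
      rw [hv j, hf]
      simp only
      rw [dif_pos (by omega : (j : ℕ) + 1 ≤ n), dif_pos (by omega : (j : ℕ) ≤ n)]
      have e1 : (⟨(j : ℕ) + 1, by omega⟩ : Fin (n + 1)) = j.succ := Fin.ext rfl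
      have e2 : (⟨(j : ℕ), by omega⟩ : Fin (n + 1)) = j.castSucc := Fin.ext rfl
      rw [e1, e2]
      have e3 : n - (j : ℕ) = (n - 1 - (j : ℕ)) + 1 := by omega
      have e4 : n - ((j : ℕ) + 1) = n - 1 - (j : ℕ) := by omega
      rw [e3, e4, pow_succ, pow_succ]
      ring
    calc μ ^ n + ∑ j : Fin n, (-1 : ℂ) ^ ((j : ℕ) + 1) * v j * μ ^ (n - 1 - (j : ℕ))
        = μ ^ n + ∑ j : Fin n, (f ((j : ℕ) + 1) - f (j : ℕ)) := by
          rw [Finset.sum_congr rfl (fun j _ => key j)]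
      _ = μ ^ n + ∑ k ∈ Finset.range n, (f (k + 1) - f k) := by
          rw [Fin.sum_univ_eq_sum_range (fun k => f (k + 1) - f k) n]
      _ = μ ^ n + (f n - f 0) := by rw [Finset.sum_range_sub f n]
      _ = 0 := by
          have hfn : f n = 0 := by
            rw [hf]; simp only [dif_pos (le_refl n)]
            have : (⟨n, by omega⟩ : Fin (n + 1)) = Fin.last n := Fin.ext rfl
            rw [this, hzn]; ring
          have hf0 : f 0 = μ ^ n := by
            rw [hf]; simp only [dif_pos (Nat.zero_le n)]
            have : (⟨0, by omega⟩ : Fin (n + 1)) = 0 := Fin.ext rfl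
            rw [this, hz0]; simp
          rw [hfn, hf0]; ring
  · intro h
    have hmon := monic_polyOf n v
    have hdeg := natDegree_polyOf n v
    obtain ⟨q, hq⟩ := Polynomial.dvd_iff_isRoot.mpr h
    have hq0 : q ≠ 0 := by
      rintro rfl
      rw [mul_zero] at hq
      exact hmon.ne_zero hq
    have hqdeg : q.natDegree = n - 1 := by
      have := Polynomial.natDegree_mul (Polynomial.X_sub_C_ne_zero μ) hq0
      rw [← hq, hdeg, Polynomial.natDegree_X_sub_C] at this
      omega
    have hqmon : q.Monic := (Polynomial.monic_X_sub_C μ).of_mul_monic_left (hq ▸ hmon)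
    have hqlead : q.coeff (n - 1) = 1 := by
      have := hqmon
      rw [Polynomial.Monic, Polynomial.leadingCoeff, hqdeg] at this
      exact this
    refine ⟨fun j => if (j : ℕ) = n then 0
      else (-1 : ℂ) ^ (j : ℕ) * q.coeff (n - 1 - (j : ℕ)), ?_, ?_, ?_⟩
    · simp only [Fin.val_zero]
      split_ifs with h0
      · omega
      rw [pow_zero, one_mul, Nat.sub_zero, hqlead]
      simp [h0]
    · simp [Fin.val_last]
    · intro j
      have hj : (j : ℕ) < n := j.isLt
      have expand : ∀ k, (polyOf n v).coeff k
          = (if k = 0 then 0 else q.coeff (k - 1)) - μ * q.coeff k := by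
        intro k
        rw [hq, sub_mul, Polynomial.coeff_sub, Polynomial.coeff_C_mul]
        congr 1
        cases k with
        | zero => simp [Polynomial.mul_coeff_zero]
        | succ m => rw [Polynomial.coeff_X_mul]; simp
      have hc := expand (n - 1 - (j : ℕ))
      rw [coeff_polyOf] at hc
      unfold coefOf at hc
      rw [dif_pos (by omega)] at hc
      have hfin : (⟨n - 1 - (n - 1 - (j : ℕ)), by omega⟩ : Fin n) = j :=
        Fin.ext (show n - 1 - (n - 1 - (j : ℕ)) = (j : ℕ) by omega)
      rw [hfin] at hc
      have hexp : n - (n - 1 - (j : ℕ)) = (j : ℕ) + 1 := by omega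
      rw [hexp] at hc
      have hA : (-1 : ℂ) ^ ((j : ℕ) + 1) * (-1 : ℂ) ^ ((j : ℕ) + 1) = 1 := by
        rw [← mul_pow]; norm_num
      have hvj : v j = (-1 : ℂ) ^ ((j : ℕ) + 1)
          * ((if n - 1 - (j : ℕ) = 0 then 0 else q.coeff (n - 1 - (j : ℕ) - 1))
            - μ * q.coeff (n - 1 - (j : ℕ))) := by
        rw [← hc, ← mul_assoc, hA, one_mul]
      rw [hvj]
      simp only [Fin.coe_castSucc, Fin.val_succ]
      rw [if_neg (by omega : ¬ (j : ℕ) = n)]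
      by_cases hlast : (j : ℕ) + 1 = n
      · rw [if_pos hlast, if_pos (by omega : n - 1 - (j : ℕ) = 0)]
        rw [pow_succ]
        ring
      · rw [if_neg hlast, if_neg (by omega : ¬ n - 1 - (j : ℕ) = 0)]
        have : n - 1 - (j : ℕ) - 1 = n - 1 - ((j : ℕ) + 1) := by omega
        rw [this, pow_succ]
        ring

theorem symProd_complement_eq (n N : ℕ) (hn : 2 ≤ n)
    (μ : Fin N → ℂ) (hμ : Function.Injective μ) :
    symProd n ((Set.range μ)ᶜ) = (⋃ j, hplane n (μ j))ᶜ := by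
  have hn1 : 1 ≤ n := by omega
  ext v
  simp only [Set.mem_compl_iff, Set.mem_iUnion, not_exists]
  constructor
  · rintro ⟨lam, hlam, rfl⟩ j hj
    rw [mem_hplane_iff n hn1 (μ j), polyOf_symPoly] at hj
    simp only [Polynomial.eval_prod, Polynomial.eval_sub, Polynomial.eval_X,
      Polynomial.eval_C] at hj
    obtain ⟨i, -, hi⟩ := Finset.prod_eq_zero_iff.mp hj
    exact hlam i ⟨j, sub_eq_zero.mp hi⟩
  · intro hv
    have hmon := monic_polyOf n v
    have hsplits : (polyOf n v).Splits := IsAlgClosed.splits _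
    have hcard : Multiset.card (polyOf n v).roots = n := by
      rw [Polynomial.splits_iff_card_roots.mp hsplits, natDegree_polyOf]
    set L := (polyOf n v).roots.toList with hL
    have hlen : L.length = n := by rw [hL, Multiset.length_toList, hcard]
    set lam : Fin n → ℂ := fun i => L.get (Fin.cast hlen.symm i) with hlam
    have hofn : List.ofFn lam = L := by
      conv_rhs => rw [← List.ofFn_get L]
      rw [hlam]
      exact (List.ofFn_congr hlen L.get).symm
    have hprod : polyOf n v = ∏ i, (X - C (lam i)) := by
      rw [hsplits.eq_prod_roots_of_monic hmon]
      rw [← Multiset.coe_toList (polyOf n v).roots, ← hL, ← hofn]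
      rw [Multiset.map_coe, List.map_ofFn, Multiset.prod_coe, List.prod_ofFn]
      rfl
    have hveq : v = symPoly n lam := polyOf_inj (by rw [hprod, ← polyOf_symPoly])
    refine ⟨lam, ?_, hveq.symm⟩
    intro i hi
    obtain ⟨j, hj⟩ := hi
    apply hv j
    rw [mem_hplane_iff n hn1, hprod]
    simp only [Polynomial.eval_prod, Polynomial.eval_sub, Polynomial.eval_X, Polynomial.eval_C]
    exact Finset.prod_eq_zero (Finset.mem_univ i) (by rw [hj, sub_self])
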